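/- Let H be a regular unitarily invariant space with the Corona property, and let a be a weak-* closed ideal of M(H). Then supp(a) = ⋂_{f ∈ a} AZ(f), where AZ(f) is the approximate zero set of the single function f. In particular, the approximate zero set of a consists exactly of the common approximate zeros of its elements. -/

import Mathlib

/-!
STATEMENT 11: For a regular unitarily invariant space with the Corona property
and a (weak-* closed) ideal a of M(H): supp(a) = ⋂_{f ∈ a} AZ(f), the set of
common approximate zeros of the members of a.

The Corona property is encoded in its standard form: any finite family of
multipliers bounded below in modulus on the ball generates the whole algebra.
The structural facts of regular unitarily invariant spaces that are used are
that multipliers are bounded and that functions holomorphic on a neighbourhood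
of the closed ball are multipliers.
-/

set_option synthInstance.maxHeartbeats 1000000
set_option maxHeartbeats 1000000

noncomputable section

open scoped BigOperators

abbrev Ed (d : ℕ) := EuclideanSpace ℂ (Fin d)

abbrev Ball (d : ℕ) : Type _ := ↥(Metric.ball (0 : Ed d) 1)

/-- The support of an ideal of the multiplier algebra. -/
def idealSupp {d : ℕ} {A : Subalgebra ℂ (Ball d → ℂ)} (X : Fin d → A) (a : Ideal A) :
    Set (Ed d) :=
  {z | ¬ ∃ f ∈ a, ∃ c : ℂ, c ≠ 0 ∧ ∃ g : Fin d → A,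
      f = algebraMap ℂ A c + ∑ j, (X j - algebraMap ℂ A (z j)) * g j}

/-- The approximate zero set of a family of multipliers. -/
def AZset {d : ℕ} {A : Subalgebra ℂ (Ball d → ℂ)} (S : Set A) : Set (Ed d) :=
  {z | z ∈ Metric.closedBall (0 : Ed d) 1 ∧ ∃ w : ℕ → Ball d,
      Filter.Tendsto (fun n => ((w n : Ed d))) Filter.atTop (nhds z) ∧
      ∀ f ∈ S, Filter.Tendsto (fun n => (f : Ball d → ℂ) (w n)) Filter.atTop (nhds 0)}

lemma Ed.norm_le_sum {d : ℕ} (v : Ed d) : ‖v‖ ≤ ∑ j, ‖v j‖ := by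
  rw [EuclideanSpace.norm_eq]
  calc Real.sqrt (∑ i, ‖v i‖ ^ 2) ≤ Real.sqrt ((∑ i, ‖v i‖) ^ 2) :=
        Real.sqrt_le_sqrt (Finset.sum_sq_le_sq_sum_of_nonneg fun _ _ => norm_nonneg _)
    _ = ∑ i, ‖v i‖ := Real.sqrt_sq (Finset.sum_nonneg fun _ _ => norm_nonneg _)

lemma Ed.coord_le_norm {d : ℕ} (v : Ed d) (j : Fin d) : ‖v j‖ ≤ ‖v‖ := by
  rw [EuclideanSpace.norm_eq,
    show ‖v j‖ = Real.sqrt (‖v j‖ ^ 2) from (Real.sqrt_sq (norm_nonneg _)).symm]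
  exact Real.sqrt_le_sqrt (Finset.single_le_sum (f := fun i => ‖v i‖ ^ 2)
    (fun _ _ => sq_nonneg _) (Finset.mem_univ j))

theorem supp_eq_iInter_AZ {d : ℕ} {A : Subalgebra ℂ (Ball d → ℂ)}
    (X : Fin d → A)
    (hX : ∀ (j : Fin d) (w : Ball d), (X j : Ball d → ℂ) w = (w : Ed d) j)
    (hbd : ∀ f : A, ∃ C : ℝ, ∀ w : Ball d, ‖(f : Ball d → ℂ) w‖ ≤ C)
    (Hhol : ∀ F : Ed d → ℂ,
      (∃ U : Set (Ed d), IsOpen U ∧ Metric.closedBall (0 : Ed d) 1 ⊆ U ∧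
        DifferentiableOn ℂ F U) →
      (fun w : Ball d => F (w : Ed d)) ∈ A)
    -- Corona property:
    (hCorona : ∀ (m : ℕ) (F : Fin m → A),
      (∃ ε : ℝ, 0 < ε ∧ ∀ w : Ball d, ε ≤ ∑ i, ‖(F i : Ball d → ℂ) w‖) →
      ∃ G : Fin m → A, ∑ i, F i * G i = 1)
    (a : Ideal A) :
    idealSupp X a = ⋂ f ∈ (a : Set A), AZset ({f} : Set A) := by
  ext z
  simp only [Set.mem_iInter, SetLike.mem_coe]
  constructor
  · -- supp ⊆ ⋂ : contrapositive
    intro hz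
    by_contra hz'
    push_neg at hz'
    obtain ⟨f, hfa, hfAZ⟩ := hz'
    -- key lower bound
    have key : ∃ ε : ℝ, 0 < ε ∧
        ∀ w : Ball d, ε ≤ ‖(f : Ball d → ℂ) w‖ + ∑ j, ‖(w : Ed d) j - z j‖ := by
      by_cases hzb : z ∈ Metric.closedBall (0 : Ed d) 1
      · by_contra hno
        push_neg at hno
        choose w hw using fun n : ℕ => hno (1 / (n + 1)) (by positivity)
        exact hfAZ ⟨hzb, w, by
          rw [tendsto_iff_norm_sub_tendsto_zero]
          refine squeeze_zero (fun n => norm_nonneg _) (fun n => ?_)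
            tendsto_one_div_add_atTop_nhds_zero_nat
          refine le_trans (Ed.norm_le_sum _) (le_trans ?_ (hw n).le)
          have : ∀ j, ‖((w n : Ed d) - z) j‖ = ‖(w n : Ed d) j - z j‖ := by
            intro j; simp
          simp only [this]
          exact le_add_of_nonneg_left (norm_nonneg _),
          by
          intro f' hf'
          rw [Set.mem_singleton_iff] at hf'
          subst hf'
          refine squeeze_zero_norm (fun n => ?_) tendsto_one_div_add_atTop_nhds_zero_nat
          refine le_trans ?_ (hw n).le
          exact le_add_of_nonneg_right (Finset.sum_nonneg fun _ _ => norm_nonneg _)⟩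
      · rw [Metric.mem_closedBall, dist_zero_right, not_le] at hzb
        refine ⟨‖z‖ - 1, by linarith, fun w => ?_⟩
        have hw1 : ‖(w : Ed d)‖ < 1 := by
          have := w.2; rwa [Metric.mem_ball, dist_zero_right] at this
        have h1 : ‖z‖ - 1 ≤ ‖(w : Ed d) - z‖ := by
          have := norm_sub_norm_le z (w : Ed d)
          have h2 : ‖z - (w : Ed d)‖ = ‖(w : Ed d) - z‖ := norm_sub_rev _ _
          linarith
        have h3 : ‖(w : Ed d) - z‖ ≤ ∑ j, ‖(w : Ed d) j - z j‖ := by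
          have := Ed.norm_le_sum ((w : Ed d) - z)
          have heq : ∀ j, ‖((w : Ed d) - z) j‖ = ‖(w : Ed d) j - z j‖ := by
            intro j; simp
          simpa only [heq] using this
        have := norm_nonneg ((f : Ball d → ℂ) w)
        linarith
    obtain ⟨ε, hε, hbound⟩ := key
    set F : Fin (d + 1) → A := Fin.cons f (fun j => X j - algebraMap ℂ A (z j)) with hF
    obtain ⟨G, hG⟩ := hCorona (d + 1) F ⟨ε, hε, fun w => by
      rw [Fin.sum_univ_succ]
      have h0 : (F 0 : Ball d → ℂ) = (f : Ball d → ℂ) := by rw [hF, Fin.cons_zero]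
      have hs : ∀ j : Fin d, ‖(F j.succ : Ball d → ℂ) w‖ = ‖(w : Ed d) j - z j‖ := by
        intro j
        rw [hF, Fin.cons_succ]
        have : ((X j - algebraMap ℂ A (z j) : A) : Ball d → ℂ) w
            = (X j : Ball d → ℂ) w - z j := by
          simp only [AddSubgroupClass.coe_sub, SubalgebraClass.coe_algebraMap,
            Pi.sub_apply, Pi.algebraMap_apply, Algebra.algebraMap_self, RingHom.id_apply]
        rw [this, hX]
      rw [h0]
      simp only [hs]
      exact hbound w⟩
    rw [Fin.sum_univ_succ] at hG
    simp only [hF, Fin.cons_zero, Fin.cons_succ] at hG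
    refine hz ⟨f * G 0, a.mul_mem_right _ hfa, 1, one_ne_zero, fun j => -(G (Fin.succ j)), ?_⟩
    rw [map_one]
    have hneg : ∑ j, (X j - algebraMap ℂ A (z j)) * -(G (Fin.succ j))
        = -∑ j, (X j - algebraMap ℂ A (z j)) * G (Fin.succ j) := by
      rw [← Finset.sum_neg_distrib]
      exact Finset.sum_congr rfl fun j _ => mul_neg (X j - algebraMap ℂ A (z j)) (G (Fin.succ j))
    rw [hneg]
    linear_combination hG
  · -- ⋂ ⊆ supp
    intro hz
    rintro ⟨f, hfa, c, hc, g, hfeq⟩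
    obtain ⟨hzb, w, hwz, hwf⟩ := hz f hfa
    have hf0 : Filter.Tendsto (fun n => (f : Ball d → ℂ) (w n)) Filter.atTop (nhds 0) :=
      hwf f rfl
    have hval : ∀ v : Ball d, (f : Ball d → ℂ) v
        = c + ∑ j, ((v : Ed d) j - z j) * (g j : Ball d → ℂ) v := by
      intro v
      have h := congrArg (fun x : A => (x : Ball d → ℂ) v) hfeq
      simp only [Subalgebra.coe_add, Subalgebra.coe_mul, AddSubgroupClass.coe_sub,
        AddSubmonoidClass.coe_finset_sum, SubalgebraClass.coe_algebraMap,
        Pi.add_apply, Pi.mul_apply, Pi.sub_apply, Finset.sum_apply,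
        Pi.algebraMap_apply, Algebra.algebraMap_self, RingHom.id_apply] at h
      rw [h]
      congr 1
      refine Finset.sum_congr rfl fun j _ => ?_
      rw [hX]
    have hnz : Filter.Tendsto (fun n => ‖(w n : Ed d) - z‖) Filter.atTop (nhds 0) := by
      rw [tendsto_iff_norm_sub_tendsto_zero] at hwz
      exact hwz
    have hsum : Filter.Tendsto
        (fun n => ∑ j, ((w n : Ed d) j - z j) * (g j : Ball d → ℂ) (w n))
        Filter.atTop (nhds 0) := by
      have : Filter.Tendsto
          (fun n => ∑ j : Fin d, ((w n : Ed d) j - z j) * (g j : Ball d → ℂ) (w n))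
          Filter.atTop (nhds (∑ _j : Fin d, (0 : ℂ))) := by
        refine tendsto_finset_sum _ fun j _ => ?_
        obtain ⟨C, hC⟩ := hbd (g j)
        refine squeeze_zero_norm (fun n => ?_)
          (a := fun n => ‖(w n : Ed d) - z‖ * max C 0) ?_
        · rw [norm_mul]
          have hcoord : ‖(w n : Ed d) j - z j‖ ≤ ‖(w n : Ed d) - z‖ := by
            have := Ed.coord_le_norm ((w n : Ed d) - z) j
            simpa using this
          exact mul_le_mul hcoord (le_max_of_le_left (hC _)) (norm_nonneg _)
            (norm_nonneg _)
        · have := hnz.mul_const (max C 0)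
          simpa using this
      simpa using this
    have hlim : Filter.Tendsto (fun n => (f : Ball d → ℂ) (w n)) Filter.atTop (nhds c) := by
      have := (tendsto_const_nhds (x := c) (f := Filter.atTop (α := ℕ))).add hsum
      rw [add_zero] at this
      refine this.congr fun n => ?_
      exact (hval (w n)).symm
    exact hc (tendsto_nhds_unique hlim hf0)

end
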